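/- Fusion of finitely supported indicator-type probabilistic constraints recovers Dempster's rule of combination: if P = Σ_{A∈𝒜} m(A) δ_{1_A} and P' = Σ_{A'∈𝒜'} m'(A') δ_{1_{A'}} with Σ m(A) = Σ m'(A') = 1 and Σ_{A∩A'≠∅} m(A)m'(A') ≠ 0, then P ⋆ P' = (1/K) Σ_{A∩A'≠∅} m(A) m'(A') δ_{1_{A∩A'}} where K = 1 − Σ_{A∩A'=∅} m(A)m'(A'). -/

import Mathlib

open MeasureTheory Set
open scoped ENNReal

/-- The rescaled function `f† = f / ‖f‖` (with `f† = 𝟏` when `‖f‖ = 0`). -/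
noncomputable def rescaleFun {X : Type*} (f : X → ℝ≥0∞) : X → ℝ≥0∞ :=
  if (⨆ x, f x) = 0 then fun _ => 1 else fun x => f x / ⨆ y, f y

/-- The rescaled probabilistic constraint `P†(F) = ∫ 1_F(f†) ‖f‖ P(df)`. -/
noncomputable def rescaleConstraint {X : Type*} [MeasurableSpace X]
    (P : Measure (X → ℝ≥0∞)) : Measure (X → ℝ≥0∞) :=
  (P.withDensity fun f => ⨆ x, f x).map rescaleFun

/-- The weighted semi-norm `‖M‖ = ∫ ‖f‖ M(df)`. -/
noncomputable def constraintNorm {X : Type*} [MeasurableSpace X]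
    (M : Measure (X → ℝ≥0∞)) : ℝ≥0∞ :=
  ∫⁻ f, ⨆ x, f x ∂M

/-- Convolution of measures on the multiplicative semigroup of functions:
`(P * P')(F) = ∫∫ 1_F (f · f') P(df) P'(df')`. -/
noncomputable def convConstraint {X : Type*} [MeasurableSpace X]
    (P P' : Measure (X → ℝ≥0∞)) [SFinite P] [SFinite P'] :
    Measure (X → ℝ≥0∞) :=
  (P.prod P').map fun p => fun x => p.1 x * p.2 x

/-- The fusion operation `P ⋆ P' = (P * P')† / ‖P * P'‖`. -/
noncomputable def fuse {X : Type*} [MeasurableSpace X]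
    (P P' : Measure (X → ℝ≥0∞)) [SFinite P] [SFinite P'] :
    Measure (X → ℝ≥0∞) :=
  (constraintNorm (convConstraint P P'))⁻¹ •
    rescaleConstraint (convConstraint P P')


instance fuse_sfinite {X : Type*} [MeasurableSpace X]
    (P P' : Measure (X → ℝ≥0∞)) [SFinite P] [SFinite P'] :
    SFinite (fuse P P') := by
  unfold fuse rescaleConstraint convConstraint; infer_instance

open scoped Classical


instance finsum_sfinite {X ι : Type*} [MeasurableSpace X] [Fintype ι]
    (μ : ι → Measure X) [∀ i, SFinite (μ i)] : SFinite (∑ i, μ i) := by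
  rw [← Measure.sum_fintype]; infer_instance

section Aux
variable {α β : Type*} [MeasurableSpace α] [MeasurableSpace β]

lemma sfinite_finsetSum {ι : Type*} (s : Finset ι) (μ : ι → Measure α)
    [∀ i, SFinite (μ i)] : SFinite (∑ i ∈ s, μ i) := by
  classical
  induction s using Finset.cons_induction with
  | empty => simpa using inferInstanceAs (SFinite (0 : Measure α))
  | cons a t ha ih => rw [Finset.sum_cons]; haveI := ih; infer_instance

lemma prod_finsetSum_left {ι : Type*} (s : Finset ι) (μ : ι → Measure α)
    [∀ i, SFinite (μ i)] (ν : Measure β) [SFinite ν] :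
    (∑ i ∈ s, μ i).prod ν = ∑ i ∈ s, (μ i).prod ν := by
  classical
  induction s using Finset.cons_induction with
  | empty => simp
  | cons a t ha ih =>
    haveI := sfinite_finsetSum t μ
    rw [Finset.sum_cons, Finset.sum_cons, Measure.add_prod, ih]

lemma prod_finsetSum_right {ι : Type*} (s : Finset ι) (ν : ι → Measure β)
    [∀ i, SFinite (ν i)] (μ : Measure α) [SFinite μ] :
    μ.prod (∑ i ∈ s, ν i) = ∑ i ∈ s, μ.prod (ν i) := by
  classical
  induction s using Finset.cons_induction with
  | empty => simp
  | cons a t ha ih =>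
    haveI := sfinite_finsetSum t ν
    rw [Finset.sum_cons, Finset.sum_cons, Measure.prod_add, ih]

lemma prod_smul_left' (c : ℝ≥0∞) (μ : Measure α) (ν : Measure β) [SFinite μ] [SFinite ν] :
    (c • μ).prod ν = c • μ.prod ν := by
  ext s hs
  rw [Measure.prod_apply hs, Measure.smul_apply, Measure.prod_apply hs,
    lintegral_smul_measure, smul_eq_mul]

lemma prod_smul_right' (c : ℝ≥0∞) (μ : Measure α) (ν : Measure β) [SFinite μ] [SFinite ν] :
    μ.prod (c • ν) = c • μ.prod ν := by
  ext s hs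
  rw [Measure.prod_apply hs, Measure.smul_apply, Measure.prod_apply hs, smul_eq_mul,
    ← lintegral_const_mul c (measurable_measure_prodMk_left hs)]
  simp

lemma measure_map_finsetSum {ι : Type*} (s : Finset ι) (μ : ι → Measure α) {f : α → β}
    (hf : Measurable f) : (∑ i ∈ s, μ i).map f = ∑ i ∈ s, (μ i).map f := by
  classical
  induction s using Finset.cons_induction with
  | empty => simp
  | cons a t ha ih => rw [Finset.sum_cons, Finset.sum_cons, Measure.map_add _ _ hf, ih]

lemma withDensity_finsetSum {ι : Type*} (s : Finset ι) (μ : ι → Measure α) (f : α → ℝ≥0∞) :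
    (∑ i ∈ s, μ i).withDensity f = ∑ i ∈ s, (μ i).withDensity f := by
  classical
  induction s using Finset.cons_induction with
  | empty => simp
  | cons a t ha ih => rw [Finset.sum_cons, Finset.sum_cons, withDensity_add_measure, ih]

lemma withDensity_dirac' {g : α → ℝ≥0∞} (hg : Measurable g) (a : α) :
    (Measure.dirac a).withDensity g = g a • Measure.dirac a := by
  ext s hs
  rw [withDensity_apply _ hs, setLIntegral_dirac' hg hs, Measure.smul_apply,
    Measure.dirac_apply' _ hs, smul_eq_mul]
  by_cases h : a ∈ s <;> simp [h]

end Aux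

section Ind
variable {X : Type*}

lemma sup_indicator_one (S : Set X) :
    (⨆ x, S.indicator (fun _ => (1 : ℝ≥0∞)) x) = if S.Nonempty then 1 else 0 := by
  split_ifs with h
  · obtain ⟨x0, hx0⟩ := h
    refine le_antisymm (iSup_le fun x => ?_) ?_
    · by_cases hx : x ∈ S <;> simp [hx]
    · calc (1 : ℝ≥0∞) = S.indicator (fun _ => 1) x0 := by simp [hx0]
        _ ≤ ⨆ x, S.indicator (fun _ => (1 : ℝ≥0∞)) x := le_iSup _ x0
  · rw [Set.not_nonempty_iff_eq_empty] at h
    simp [h]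

lemma indicator_mul_indicator_one (S T : Set X) :
    (fun x => S.indicator (fun _ => (1 : ℝ≥0∞)) x * T.indicator (fun _ => 1) x) =
      (S ∩ T).indicator (fun _ => 1) := by
  funext x
  by_cases h1 : x ∈ S <;> by_cases h2 : x ∈ T <;> simp [h1, h2]

lemma rescaleFun_indicator_one {S : Set X} (h : S.Nonempty) :
    rescaleFun (S.indicator fun _ => (1 : ℝ≥0∞)) = S.indicator (fun _ => 1) := by
  unfold rescaleFun
  rw [sup_indicator_one, if_pos h]
  simp

end Ind

/-- Fusion of finitely supported indicator-type probabilistic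
constraints recovers Dempster's rule of combination: for
`P = Σ_{A ∈ 𝒜} m(A) δ_{1_A}` and `P' = Σ_{A' ∈ 𝒜'} m'(A') δ_{1_{A'}}` with
masses summing to one and non-contradictory evidence, `P ⋆ P'` is the
normalised sum of `m(A) m'(A') δ_{1_{A ∩ A'}}` over intersecting pairs, with
normalisation `K = 1 − Σ_{A ∩ A' = ∅} m(A) m'(A')`. -/
theorem fuse_dempster_rule
    (X : Type*) [TopologicalSpace X] [PolishSpace X]
    [MeasurableSpace X] [BorelSpace X]
    (ι ι' : Type*) [Fintype ι] [Fintype ι']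
    (A : ι → Set X) (A' : ι' → Set X)
    (hA : ∀ i, MeasurableSet (A i)) (hA' : ∀ j, MeasurableSet (A' j))
    (hAne : ∀ i, (A i).Nonempty) (hA'ne : ∀ j, (A' j).Nonempty)
    (m : ι → ℝ≥0∞) (m' : ι' → ℝ≥0∞)
    (hm : (∑ i, m i) = 1) (hm' : (∑ j, m' j) = 1)
    (hsup : Measurable fun g : X → ℝ≥0∞ => ⨆ x, g x)
    (hdag : Measurable (rescaleFun (X := X)))
    (hmul : Measurable fun p : (X → ℝ≥0∞) × (X → ℝ≥0∞) =>
      (fun x => p.1 x * p.2 x : X → ℝ≥0∞))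
    (hne : (∑ i, ∑ j,
      if (A i ∩ A' j).Nonempty then m i * m' j else 0) ≠ 0) :
    fuse
        (∑ i, m i • Measure.dirac ((A i).indicator fun _ => (1 : ℝ≥0∞)))
        (∑ j, m' j • Measure.dirac ((A' j).indicator fun _ => (1 : ℝ≥0∞))) =
      (1 - ∑ i, ∑ j, if A i ∩ A' j = ∅ then m i * m' j else 0)⁻¹ •
        ∑ i, ∑ j,
          if (A i ∩ A' j).Nonempty then
            (m i * m' j) •
              Measure.dirac ((A i ∩ A' j).indicator fun _ => (1 : ℝ≥0∞))
          else 0 := by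
    classical
  set f : ι → (X → ℝ≥0∞) := fun i => (A i).indicator fun _ => 1 with hfdef
  set f' : ι' → (X → ℝ≥0∞) := fun j => (A' j).indicator fun _ => 1 with hf'def
  set P : Measure (X → ℝ≥0∞) := ∑ i, m i • Measure.dirac (f i) with hPdef
  set P' : Measure (X → ℝ≥0∞) := ∑ j, m' j • Measure.dirac (f' j) with hP'def
  have hC : convConstraint P P' =
      ∑ i, ∑ j, (m i * m' j) •
        Measure.dirac ((A i ∩ A' j).indicator fun _ => (1 : ℝ≥0∞)) := by
    unfold convConstraint
    have h1 : P.prod P' = ∑ i, ∑ j, (m i * m' j) • Measure.dirac (f i, f' j) := by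
      rw [hPdef, prod_finsetSum_left]
      refine Finset.sum_congr rfl fun i _ => ?_
      rw [prod_smul_left', hP'def, prod_finsetSum_right, Finset.smul_sum]
      refine Finset.sum_congr rfl fun j _ => ?_
      rw [prod_smul_right', Measure.dirac_prod_dirac, smul_smul]
    rw [h1, measure_map_finsetSum _ _ hmul]
    refine Finset.sum_congr rfl fun i _ => ?_
    rw [measure_map_finsetSum _ _ hmul]
    refine Finset.sum_congr rfl fun j _ => ?_
    rw [Measure.map_smul, Measure.map_dirac' hmul]
    congr 1
    exact congrArg Measure.dirac (indicator_mul_indicator_one (A i) (A' j))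
  have hN : constraintNorm (convConstraint P P') =
      ∑ i, ∑ j, if (A i ∩ A' j).Nonempty then m i * m' j else 0 := by
    rw [hC]
    unfold constraintNorm
    rw [lintegral_finset_sum_measure]
    refine Finset.sum_congr rfl fun i _ => ?_
    rw [lintegral_finset_sum_measure]
    refine Finset.sum_congr rfl fun j _ => ?_
    rw [lintegral_smul_measure, lintegral_dirac' _ hsup, sup_indicator_one]
    split_ifs <;> simp
  have hR : rescaleConstraint (convConstraint P P') =
      ∑ i, ∑ j,
        if (A i ∩ A' j).Nonempty then
          (m i * m' j) •
            Measure.dirac ((A i ∩ A' j).indicator fun _ => (1 : ℝ≥0∞))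
        else 0 := by
    rw [hC]
    unfold rescaleConstraint
    rw [withDensity_finsetSum, measure_map_finsetSum _ _ hdag]
    refine Finset.sum_congr rfl fun i _ => ?_
    rw [withDensity_finsetSum, measure_map_finsetSum _ _ hdag]
    refine Finset.sum_congr rfl fun j _ => ?_
    rw [withDensity_smul_measure, withDensity_dirac' hsup, Measure.map_smul,
      Measure.map_smul, Measure.map_dirac' hdag]
    simp only [sup_indicator_one]
    split_ifs with h
    · rw [one_smul, rescaleFun_indicator_one h]
    · rw [zero_smul, smul_zero]
  have htot : (∑ i, ∑ j, if (A i ∩ A' j).Nonempty then m i * m' j else 0) +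
      (∑ i, ∑ j, if A i ∩ A' j = ∅ then m i * m' j else 0) = 1 := by
    have hsplit : ∀ i j,
        (if (A i ∩ A' j).Nonempty then m i * m' j else 0) +
          (if A i ∩ A' j = ∅ then m i * m' j else 0) = m i * m' j := by
      intro i j
      rcases Set.eq_empty_or_nonempty (A i ∩ A' j) with h | h
      · simp [h]
      · simp [h, Set.nonempty_iff_ne_empty.1 h]
    calc (∑ i, ∑ j, if (A i ∩ A' j).Nonempty then m i * m' j else 0) +
          (∑ i, ∑ j, if A i ∩ A' j = ∅ then m i * m' j else 0)
        = ∑ i, ∑ j, m i * m' j := by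
          rw [← Finset.sum_add_distrib]
          refine Finset.sum_congr rfl fun i _ => ?_
          rw [← Finset.sum_add_distrib]
          exact Finset.sum_congr rfl fun j _ => hsplit i j
      _ = (∑ i, m i) * (∑ j, m' j) := by rw [Finset.sum_mul_sum]
      _ = 1 := by rw [hm, hm', one_mul]
  have hEne : (∑ i, ∑ j, if A i ∩ A' j = ∅ then m i * m' j else 0) ≠ ∞ := by
    intro hcon
    rw [hcon] at htot
    simp at htot
  have hK : (1 - ∑ i, ∑ j, if A i ∩ A' j = ∅ then m i * m' j else 0) =
      ∑ i, ∑ j, if (A i ∩ A' j).Nonempty then m i * m' j else 0 :=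
    (ENNReal.eq_sub_of_add_eq hEne htot).symm
  unfold fuse
  rw [hN, hR, hK]
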